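/- arXiv:1602.04309 — 3 statements merged into one kernel-verified Lean document; each statement's English description precedes it below -/
import Mathlib

section
/- Let (X, μ) be a finite measure space and let p ≥ q ≥ 1. If f_j, f ∈ L^q(X, μ) with f_j, f ≥ 0 almost everywhere, then ‖f_j − f‖_{L^q} → 0 if and only if ‖f_j^{q/p} − f^{q/p}‖_{L^p} → 0. -/
open MeasureTheory Filter Topology
open scoped ENNReal NNReal

private lemma add_rpow_le' {x y r : ℝ} (hx : 0 ≤ x) (hy : 0 ≤ y) (hr : 0 ≤ r) (hr1 : r ≤ 1) :
    (x + y) ^ r ≤ x ^ r + y ^ r := by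
  have h := NNReal.rpow_add_le_add_rpow x.toNNReal y.toNNReal hr hr1
  have h2 := (NNReal.coe_le_coe).2 h
  simpa [NNReal.coe_rpow, Real.coe_toNNReal x hx, Real.coe_toNNReal y hy,
    ← Real.toNNReal_add hx hy, Real.coe_toNNReal _ (add_nonneg hx hy)] using h2

private lemma abs_rpow_sub_rpow_le' {a b r : ℝ} (ha : 0 ≤ a) (hb : 0 ≤ b) (hr : 0 < r)
    (hr1 : r ≤ 1) : |a ^ r - b ^ r| ≤ |a - b| ^ r := by
  wlog hab : b ≤ a generalizing a b
  · rw [abs_sub_comm, abs_sub_comm a b]; exact this hb ha (le_of_not_ge hab)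
  have h1 : a ^ r ≤ (a - b) ^ r + b ^ r := by
    calc a ^ r = ((a - b) + b) ^ r := by ring_nf
    _ ≤ _ := add_rpow_le' (by linarith) hb hr.le hr1
  have hba : b ^ r ≤ a ^ r := Real.rpow_le_rpow hb hab hr.le
  have habs : (0:ℝ) ≤ (a-b) ^ r := Real.rpow_nonneg (by linarith) r
  rw [abs_of_nonneg (by linarith), abs_of_nonneg (by linarith)]
  linarith

private lemma key2 {a b r : ℝ} (hb : 0 ≤ b) (hba : b ≤ a) (hr : 0 < r) (hr1 : r ≤ 1) :
    r * (a - b) ≤ a ^ (1 - r) * (a ^ r - b ^ r) := by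
  rcases eq_or_lt_of_le (hb.trans hba) with h0 | ha
  · have hb0 : b = 0 := le_antisymm (hba.trans h0.symm.le) hb
    simp [← h0, hb0]
  · set t := b / a with htdef
    have ht0 : 0 ≤ t := div_nonneg hb ha.le
    have ht : t ^ r ≤ (1 - r) + r * t := by
      have h := Real.geom_mean_le_arith_mean2_weighted (w₁ := 1 - r) (w₂ := r) (p₁ := 1)
        (p₂ := t) (by linarith) hr.le zero_le_one ht0 (by ring)
      simpa using h
    have hbt : b = a * t := by rw [htdef]; field_simp
    have h1 : a ^ (1-r) * a ^ r = a := by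
      rw [← Real.rpow_add ha]; simp
    have h2 : b ^ r = a ^ r * t ^ r := by
      rw [hbt, Real.mul_rpow ha.le ht0]
    have har : 0 ≤ a ^ r := Real.rpow_nonneg ha.le r
    calc r * (a - b) = a ^ (1-r) * a ^ r * (r * (1 - t)) := by rw [h1, hbt]; ring
    _ ≤ a ^ (1-r) * a ^ r * (1 - t ^ r) := by
        apply mul_le_mul_of_nonneg_left _ (mul_nonneg (Real.rpow_nonneg ha.le _) har)
        linarith
    _ = a ^ (1-r) * (a ^ r - b ^ r) := by rw [h2]; ring

private lemma key2' {a b r : ℝ} (ha : 0 ≤ a) (hb : 0 ≤ b) (hr : 0 < r) (hr1 : r ≤ 1) :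
    |a - b| ≤ r⁻¹ * (max a b) ^ (1 - r) * |a ^ r - b ^ r| := by
  wlog hab : b ≤ a generalizing a b
  · rw [abs_sub_comm, abs_sub_comm (a ^ r), max_comm]; exact this hb ha (le_of_not_ge hab)
  rw [max_eq_left hab, abs_of_nonneg (sub_nonneg.2 hab),
    abs_of_nonneg (sub_nonneg.2 (Real.rpow_le_rpow hb hab hr.le))]
  have hk := key2 hb hab hr hr1
  calc a - b = r⁻¹ * (r * (a - b)) := by field_simp
  _ ≤ r⁻¹ * (a ^ (1-r) * (a ^ r - b ^ r)) :=
      mul_le_mul_of_nonneg_left hk (inv_nonneg.2 hr.le)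
  _ = _ := by ring

private lemma ennnorm_rpow_of_nonneg' {a r p q : ℝ} (ha : 0 ≤ a) (hp : 0 ≤ p) (hq : 0 ≤ q)
    (hrp : r * p = q) : (‖a ^ r‖₊ : ℝ≥0∞) ^ p = (‖a‖₊ : ℝ≥0∞) ^ q := by
  rw [← enorm_eq_nnnorm, Real.enorm_eq_ofReal_abs, ← enorm_eq_nnnorm, Real.enorm_eq_ofReal_abs,
    ENNReal.ofReal_rpow_of_nonneg (abs_nonneg _) hp,
    ENNReal.ofReal_rpow_of_nonneg (abs_nonneg _) hq]
  congr 1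
  rw [abs_of_nonneg (Real.rpow_nonneg ha r), abs_of_nonneg ha, ← Real.rpow_mul ha, hrp]

private lemma eLpNorm_ofReal_eq {X : Type*} [MeasurableSpace X] (μ : Measure X) {c : ℝ}
    (hc : 0 < c) (u : X → ℝ) :
    eLpNorm u (ENNReal.ofReal c) μ = (∫⁻ x, (‖u x‖₊ : ℝ≥0∞) ^ c ∂μ) ^ (1 / c) := by
  rw [eLpNorm_eq_lintegral_rpow_enorm_toReal (ENNReal.ofReal_pos.mpr hc).ne' ENNReal.ofReal_ne_top,
    ENNReal.toReal_ofReal hc.le]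
  rfl

private lemma eLpNorm_rpow_eq {X : Type*} [MeasurableSpace X] (μ : Measure X) {c : ℝ}
    (hc : 0 < c) (u : X → ℝ) :
    eLpNorm u (ENNReal.ofReal c) μ ^ c = ∫⁻ x, (‖u x‖₊ : ℝ≥0∞) ^ c ∂μ := by
  rw [eLpNorm_ofReal_eq μ hc u, ← ENNReal.rpow_mul, one_div, inv_mul_cancel₀ hc.ne',
    ENNReal.rpow_one]

private lemma tendsto_rpow_zero_iff {c : ℝ} (hc : 0 < c) (T : ℕ → ℝ≥0∞) :
    Tendsto (fun j => T j ^ c) atTop (𝓝 0) ↔ Tendsto T atTop (𝓝 0) := by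
  constructor
  · intro h
    have h2 := ((ENNReal.continuous_rpow_const (y := c⁻¹)).tendsto 0).comp h
    rw [ENNReal.zero_rpow_of_pos (by positivity)] at h2
    have he : ((fun x : ℝ≥0∞ => x ^ c⁻¹) ∘ fun j => T j ^ c) = T := by
      funext j
      simp only [Function.comp_apply, ← ENNReal.rpow_mul, mul_inv_cancel₀ hc.ne',
        ENNReal.rpow_one]
    rwa [he] at h2
  · intro h
    have h2 := ((ENNReal.continuous_rpow_const (y := c)).tendsto 0).comp h
    rwa [ENNReal.zero_rpow_of_pos hc] at h2

private lemma tendsto_eLpNorm_iff_lint {X : Type*} [MeasurableSpace X] (μ : Measure X) {c : ℝ}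
    (hc : 0 < c) (u : ℕ → X → ℝ) :
    Tendsto (fun j => eLpNorm (u j) (ENNReal.ofReal c) μ) atTop (𝓝 0) ↔
      Tendsto (fun j => ∫⁻ x, (‖u j x‖₊ : ℝ≥0∞) ^ c ∂μ) atTop (𝓝 0) := by
  simp only [eLpNorm_ofReal_eq μ hc]
  exact tendsto_rpow_zero_iff (by positivity) _

/-- Vitali-type lemma: for nonnegative `f_j, f ∈ L^q`, `‖f_j - f‖_{L^q} → 0` iff
`‖f_j^{q/p} - f^{q/p}‖_{L^p} → 0`, where `1 ≤ q ≤ p < ∞`. -/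
theorem stmt0 {X : Type*} [MeasurableSpace X] (μ : Measure X) [IsFiniteMeasure μ]
    (p q : ℝ) (hq : 1 ≤ q) (hpq : q ≤ p)
    (f : ℕ → X → ℝ) (g : X → ℝ)
    (hf : ∀ j, MemLp (f j) (ENNReal.ofReal q) μ)
    (hg : MemLp g (ENNReal.ofReal q) μ)
    (hfpos : ∀ j, 0 ≤ᵐ[μ] f j) (hgpos : 0 ≤ᵐ[μ] g) :
    Tendsto (fun j => eLpNorm (f j - g) (ENNReal.ofReal q) μ) atTop (𝓝 0) ↔
    Tendsto (fun j =>
        eLpNorm (fun x => (f j x) ^ (q / p) - (g x) ^ (q / p)) (ENNReal.ofReal p) μ)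
      atTop (𝓝 0) := by
  have hq0 : 0 < q := lt_of_lt_of_le one_pos hq
  have hp0 : 0 < p := lt_of_lt_of_le hq0 hpq
  by_cases hqp : q = p
  · subst hqp
    simp only [div_self hq0.ne', Real.rpow_one]
    exact Iff.rfl
  have hqlt : q < p := lt_of_le_of_ne hpq hqp
  have hpq' : 0 < p - q := sub_pos.2 hqlt
  set r := q / p with hrdef
  have hr0 : 0 < r := div_pos hq0 hp0
  have hr1 : r ≤ 1 := (div_le_one hp0).2 hpq
  have hrp : r * p = q := div_mul_cancel₀ q hp0.ne'
  have hfm : ∀ j, AEStronglyMeasurable (f j) μ := fun j => (hf j).1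
  have hgm : AEStronglyMeasurable g μ := hg.1
  have hfrm : ∀ j, AEMeasurable (fun x => f j x ^ r) μ :=
    fun j => (hfm j).aemeasurable.pow aemeasurable_const
  have hgrm : AEMeasurable (fun x => g x ^ r) μ := hgm.aemeasurable.pow aemeasurable_const
  have hvm : ∀ j, AEMeasurable (fun x => f j x ^ r - g x ^ r) μ := fun j => (hfrm j).sub hgrm
  rw [tendsto_eLpNorm_iff_lint μ hq0, tendsto_eLpNorm_iff_lint μ hp0]
  simp only [Pi.sub_apply]
  constructor
  · intro h
    refine tendsto_of_tendsto_of_tendsto_of_le_of_le tendsto_const_nhds h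
      (fun j => zero_le) (fun j => lintegral_mono_ae ?_)
    filter_upwards [hfpos j, hgpos] with x ha hb
    rw [← enorm_eq_nnnorm, Real.enorm_eq_ofReal_abs, ← enorm_eq_nnnorm, Real.enorm_eq_ofReal_abs,
      ENNReal.ofReal_rpow_of_nonneg (abs_nonneg _) hp0.le,
      ENNReal.ofReal_rpow_of_nonneg (abs_nonneg _) hq0.le]
    apply ENNReal.ofReal_le_ofReal
    calc |f j x ^ r - g x ^ r| ^ p ≤ (|f j x - g x| ^ r) ^ p :=
        Real.rpow_le_rpow (abs_nonneg _) (abs_rpow_sub_rpow_le' ha hb hr0 hr1) hp0.le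
      _ = |f j x - g x| ^ q := by rw [← Real.rpow_mul (abs_nonneg _), hrp]
  · intro h
    set P := ENNReal.ofReal p with hP
    have hP1 : 1 ≤ P := by
      rw [hP]
      exact ENNReal.one_le_ofReal.mpr (hq.trans hpq)
    set K := eLpNorm (fun x => g x ^ r) P μ with hK
    set Ag := ∫⁻ x, (‖g x‖₊ : ℝ≥0∞) ^ q ∂μ with hAg
    have hKp : K ^ p = Ag := by
      rw [hK, hP, eLpNorm_rpow_eq μ hp0, hAg]
      refine lintegral_congr_ae ?_
      filter_upwards [hgpos] with x hx
      exact ennnorm_rpow_of_nonneg' hx hp0.le hq0.le hrp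
    have hAgfin : Ag ≠ ⊤ := by
      rw [hAg, ← eLpNorm_rpow_eq μ hq0]
      exact (ENNReal.rpow_lt_top_of_nonneg hq0.le hg.2.ne).ne
    have hKfin : K ≠ ⊤ := by
      intro hKtop
      have h1 : K ^ p = ⊤ := by rw [hKtop]; exact ENNReal.top_rpow_of_pos hp0
      rw [hKp] at h1
      exact hAgfin h1
    set B := (1 + K) ^ p with hB
    have hBfin : B ≠ ⊤ := by
      rw [hB]
      exact ENNReal.rpow_ne_top_of_nonneg hp0.le
        (ENNReal.add_ne_top.2 ⟨ENNReal.one_ne_top, hKfin⟩)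
    have hevA : ∀ᶠ j in atTop, (∫⁻ x, (‖f j x‖₊ : ℝ≥0∞) ^ q ∂μ) ≤ B := by
      have h1 : ∀ᶠ j in atTop,
          (∫⁻ x, (‖f j x ^ r - g x ^ r‖₊ : ℝ≥0∞) ^ p ∂μ) < 1 :=
        h (gt_mem_nhds zero_lt_one)
      filter_upwards [h1] with j hj
      have hv : eLpNorm (fun x => f j x ^ r - g x ^ r) P μ ≤ 1 := by
        rw [hP, eLpNorm_ofReal_eq μ hp0]
        exact ENNReal.rpow_le_one hj.le (by positivity)
      have htri : eLpNorm (fun x => f j x ^ r) P μ ≤ 1 + K := by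
        have heq : (fun x => f j x ^ r) =
            (fun x => f j x ^ r - g x ^ r) + (fun x => g x ^ r) := by
          funext x; simp
        rw [heq]
        exact (eLpNorm_add_le (hvm j).aestronglyMeasurable hgrm.aestronglyMeasurable
          hP1).trans (add_le_add hv le_rfl)
      calc (∫⁻ x, (‖f j x‖₊ : ℝ≥0∞) ^ q ∂μ)
          = eLpNorm (fun x => f j x ^ r) P μ ^ p := by
            rw [hP, eLpNorm_rpow_eq μ hp0]
            refine lintegral_congr_ae ?_
            filter_upwards [hfpos j] with x hx
            exact (ennnorm_rpow_of_nonneg' hx hp0.le hq0.le hrp).symm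
        _ ≤ B := by rw [hB]; exact ENNReal.rpow_le_rpow htri hp0.le
    have hs : Real.HolderConjugate (p / (p - q)) (p / q) := by
      constructor
      · rw [inv_div, inv_div, inv_one, ← add_div, sub_add_cancel, div_self hp0.ne']
      · exact div_pos hp0 hpq'
      · exact div_pos hp0 hq0
    have key : ∀ j, (∫⁻ x, (‖f j x - g x‖₊ : ℝ≥0∞) ^ q ∂μ) ≤
        ENNReal.ofReal (r⁻¹ ^ q) *
          (((∫⁻ x, (‖f j x‖₊ : ℝ≥0∞) ^ q ∂μ) + Ag) ^ (1 / (p / (p - q))) *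
            (∫⁻ x, (‖f j x ^ r - g x ^ r‖₊ : ℝ≥0∞) ^ p ∂μ) ^ r) := by
      intro j
      set φ : X → ℝ≥0∞ := fun x => ENNReal.ofReal (max (f j x) (g x)) ^ ((1 - r) * q)
        with hφ
      set ψ : X → ℝ≥0∞ := fun x => (‖f j x ^ r - g x ^ r‖₊ : ℝ≥0∞) ^ q with hψ
      have hφm : AEMeasurable φ μ :=
        (ENNReal.measurable_ofReal.comp_aemeasurable
          ((hfm j).aemeasurable.max hgm.aemeasurable)).pow aemeasurable_const
      have hψm : AEMeasurable ψ μ :=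
        ((hvm j).aestronglyMeasurable.enorm).pow aemeasurable_const
      have step1 : (∫⁻ x, (‖f j x - g x‖₊ : ℝ≥0∞) ^ q ∂μ) ≤
          ENNReal.ofReal (r⁻¹ ^ q) * ∫⁻ x, (φ * ψ) x ∂μ := by
        rw [← lintegral_const_mul' _ _ ENNReal.ofReal_ne_top]
        refine lintegral_mono_ae ?_
        filter_upwards [hfpos j, hgpos] with x ha hb
        have hmax0 : (0:ℝ) ≤ max (f j x) (g x) := le_max_of_le_left ha
        have hreal : |f j x - g x| ^ q ≤
            r⁻¹ ^ q * ((max (f j x) (g x)) ^ ((1 - r) * q) *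
              |f j x ^ r - g x ^ r| ^ q) := by
          have hk := key2' ha hb hr0 hr1
          calc |f j x - g x| ^ q
              ≤ (r⁻¹ * (max (f j x) (g x)) ^ (1 - r) * |f j x ^ r - g x ^ r|) ^ q :=
              Real.rpow_le_rpow (abs_nonneg _) hk hq0.le
            _ = _ := by
              rw [Real.mul_rpow
                  (mul_nonneg (inv_nonneg.2 hr0.le) (Real.rpow_nonneg hmax0 _))
                  (abs_nonneg _),
                Real.mul_rpow (inv_nonneg.2 hr0.le) (Real.rpow_nonneg hmax0 _),
                ← Real.rpow_mul hmax0]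
              ring
        calc (‖f j x - g x‖₊ : ℝ≥0∞) ^ q
            = ENNReal.ofReal (|f j x - g x| ^ q) := by
              rw [← enorm_eq_nnnorm, Real.enorm_eq_ofReal_abs,
                ENNReal.ofReal_rpow_of_nonneg (abs_nonneg _) hq0.le]
          _ ≤ ENNReal.ofReal (r⁻¹ ^ q * ((max (f j x) (g x)) ^ ((1 - r) * q) *
                |f j x ^ r - g x ^ r| ^ q)) := ENNReal.ofReal_le_ofReal hreal
          _ = ENNReal.ofReal (r⁻¹ ^ q) * (φ x * ψ x) := by
              show _ = ENNReal.ofReal (r⁻¹ ^ q) *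
                (ENNReal.ofReal (max (f j x) (g x)) ^ ((1 - r) * q) *
                  (‖f j x ^ r - g x ^ r‖₊ : ℝ≥0∞) ^ q)
              rw [ENNReal.ofReal_rpow_of_nonneg hmax0 (mul_nonneg (by linarith) hq0.le),
                ← enorm_eq_nnnorm, Real.enorm_eq_ofReal_abs,
                ENNReal.ofReal_rpow_of_nonneg (abs_nonneg _) hq0.le,
                ← ENNReal.ofReal_mul (Real.rpow_nonneg hmax0 _),
                ← ENNReal.ofReal_mul (by positivity)]
          _ = ENNReal.ofReal (r⁻¹ ^ q) * (φ * ψ) x := rfl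
      have hold := ENNReal.lintegral_mul_le_Lp_mul_Lq μ hs hφm hψm
      have hψint : (∫⁻ x, ψ x ^ (p / q) ∂μ) =
          ∫⁻ x, (‖f j x ^ r - g x ^ r‖₊ : ℝ≥0∞) ^ p ∂μ := by
        refine lintegral_congr fun x => ?_
        rw [hψ, ← ENNReal.rpow_mul]
        congr 1
        field_simp
      have hφint : (∫⁻ x, φ x ^ (p / (p - q)) ∂μ) ≤
          (∫⁻ x, (‖f j x‖₊ : ℝ≥0∞) ^ q ∂μ) + Ag := by
        have hmono : (∫⁻ x, φ x ^ (p / (p - q)) ∂μ) ≤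
            ∫⁻ x, ((‖f j x‖₊ : ℝ≥0∞) ^ q + (‖g x‖₊ : ℝ≥0∞) ^ q) ∂μ := by
          refine lintegral_mono_ae ?_
          filter_upwards [hfpos j, hgpos] with x ha hb
          have hφx : φ x ^ (p / (p - q)) =
              ENNReal.ofReal (max (f j x) (g x)) ^ q := by
            rw [hφ, ← ENNReal.rpow_mul]
            congr 1
            rw [hrdef]
            field_simp
          rw [hφx]
          rcases le_total (f j x) (g x) with hc | hc
          · rw [max_eq_right hc]
            have hgq : (‖g x‖₊ : ℝ≥0∞) ^ q = ENNReal.ofReal (g x) ^ q := by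
              rw [← enorm_eq_nnnorm, Real.enorm_eq_ofReal_abs, abs_of_nonneg hb]
            rw [hgq]
            exact le_add_self
          · rw [max_eq_left hc]
            have hfq : (‖f j x‖₊ : ℝ≥0∞) ^ q = ENNReal.ofReal (f j x) ^ q := by
              rw [← enorm_eq_nnnorm, Real.enorm_eq_ofReal_abs, abs_of_nonneg ha]
            rw [hfq]
            exact le_self_add
        refine hmono.trans ?_
        rw [lintegral_add_left' (show AEMeasurable (fun x => (‖f j x‖₊ : ℝ≥0∞) ^ q) μ from
          (hfm j).enorm.pow aemeasurable_const), hAg]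
      calc (∫⁻ x, (‖f j x - g x‖₊ : ℝ≥0∞) ^ q ∂μ)
          ≤ ENNReal.ofReal (r⁻¹ ^ q) * ∫⁻ x, (φ * ψ) x ∂μ := step1
        _ ≤ ENNReal.ofReal (r⁻¹ ^ q) *
            ((∫⁻ x, φ x ^ (p / (p - q)) ∂μ) ^ (1 / (p / (p - q))) *
              (∫⁻ x, ψ x ^ (p / q) ∂μ) ^ (1 / (p / q))) := mul_le_mul_right hold _
        _ ≤ _ := by
            rw [hψint, show (1:ℝ) / (p / q) = r from by rw [one_div_div, hrdef]]
            refine mul_le_mul_right (mul_le_mul_left ?_ _) _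
            exact ENNReal.rpow_le_rpow hφint
              (by rw [one_div_div]; exact div_nonneg hpq'.le hp0.le)
    have hev : ∀ᶠ j in atTop, (∫⁻ x, (‖f j x - g x‖₊ : ℝ≥0∞) ^ q ∂μ) ≤
        (ENNReal.ofReal (r⁻¹ ^ q) * (B + Ag) ^ (1 / (p / (p - q)))) *
          (∫⁻ x, (‖f j x ^ r - g x ^ r‖₊ : ℝ≥0∞) ^ p ∂μ) ^ r := by
      filter_upwards [hevA] with j hj
      refine (key j).trans ?_
      rw [← mul_assoc]
      refine mul_le_mul_left (mul_le_mul_right ?_ _) _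
      exact ENNReal.rpow_le_rpow (add_le_add hj le_rfl)
        (by rw [one_div_div]; exact div_nonneg hpq'.le hp0.le)
    have hDfin : (ENNReal.ofReal (r⁻¹ ^ q) * (B + Ag) ^ (1 / (p / (p - q)))) ≠ ⊤ :=
      ENNReal.mul_ne_top ENNReal.ofReal_ne_top
        (ENNReal.rpow_ne_top_of_nonneg
          (by rw [one_div_div]; exact div_nonneg hpq'.le hp0.le)
          (ENNReal.add_ne_top.2 ⟨hBfin, hAgfin⟩))
    have hlim : Tendsto (fun j =>
        (ENNReal.ofReal (r⁻¹ ^ q) * (B + Ag) ^ (1 / (p / (p - q)))) *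
          (∫⁻ x, (‖f j x ^ r - g x ^ r‖₊ : ℝ≥0∞) ^ p ∂μ) ^ r) atTop (𝓝 0) := by
      have h1 : Tendsto (fun j =>
          (∫⁻ x, (‖f j x ^ r - g x ^ r‖₊ : ℝ≥0∞) ^ p ∂μ) ^ r) atTop (𝓝 0) :=
        (tendsto_rpow_zero_iff hr0 _).2 h
      have h2 := ENNReal.Tendsto.const_mul h1 (Or.inr hDfin)
      simpa using h2
    exact tendsto_of_tendsto_of_tendsto_of_le_of_le' tendsto_const_nhds hlim
      (Eventually.of_forall fun j => zero_le) hev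
end

section
/- Let (X, μ) be a finite measure space and f ≥ 0 a measurable function with ∫_X f log(f) dμ < ∞ (with the convention 0·log 0 = 0). Then there exists a sequence of measurable functions f_k with f_k > 0 everywhere, f_k bounded above and bounded away from 0, such that ∫_X |f − f_k| dμ → 0 and ∫_X f (log f − log f_k) dμ → 0. -/
open MeasureTheory Filter Topology

lemma aux_bound (a c : ℝ) (ha : 0 ≤ a) (hc : 1 ≤ c) :
    |a * (Real.log a - Real.log (max c⁻¹ (min a c)))| ≤ |a * Real.log a| + 1 := by
  have hc0 : 0 < c := lt_of_lt_of_le one_pos hc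
  have hci : c⁻¹ ≤ 1 := inv_le_one_of_one_le₀ hc
  rcases ha.eq_or_lt with h0 | h0
  · simp [← h0]
  rcases le_or_gt c a with hca | hca
  · have hmin : min a c = c := min_eq_right hca
    have hmax : max c⁻¹ c = c := max_eq_right (hci.trans hc)
    rw [hmin, hmax]
    have hlog : 0 ≤ Real.log c := Real.log_nonneg hc
    have hlog2 : Real.log c ≤ Real.log a := Real.log_le_log hc0 hca
    have h1 : 0 ≤ a * (Real.log a - Real.log c) := by nlinarith
    rw [abs_of_nonneg h1]
    have h2 : 0 ≤ a * Real.log a := by nlinarith [Real.log_nonneg (hc.trans hca)]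
    rw [abs_of_nonneg h2]
    nlinarith
  · have hmin : min a c = a := min_eq_left hca.le
    rw [hmin]
    rcases le_or_gt c⁻¹ a with hia | hia
    · rw [max_eq_right hia]
      simp
      positivity
    · rw [max_eq_left hia.le, Real.log_inv]
      have h1 : a * (Real.log a - -Real.log c) = a * Real.log a + a * Real.log c := by ring
      rw [h1]
      have h2 : |a * Real.log a + a * Real.log c| ≤ |a * Real.log a| + |a * Real.log c| :=
        abs_add_le _ _
      have hlogc : 0 ≤ Real.log c := Real.log_nonneg hc
      have hinv : 0 < c⁻¹ := inv_pos.mpr hc0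
      have h3 : a * Real.log c ≤ 1 := by
        have hs := Real.log_le_sub_one_of_pos hc0
        have h4 : a * Real.log c ≤ c⁻¹ * Real.log c := by nlinarith
        have h5 : c⁻¹ * Real.log c ≤ c⁻¹ * (c - 1) := by nlinarith
        have h6 : c⁻¹ * (c - 1) = 1 - c⁻¹ := by field_simp
        nlinarith
      have h6 : |a * Real.log c| = a * Real.log c := abs_of_nonneg (by positivity)
      linarith

/-- Approximation lemma: if `f ≥ 0` has finite entropy `∫ f log f dμ < ∞`, then there are
functions `f_k`, bounded between positive constants, with `∫ |f - f_k| dμ → 0` and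
`∫ f (log f - log f_k) dμ → 0`. -/
theorem stmt1 {X : Type*} [MeasurableSpace X] (μ : Measure X) [IsFiniteMeasure μ]
    (f : X → ℝ) (hmeas : Measurable f) (hpos : ∀ x, 0 ≤ f x)
    (hent : Integrable (fun x => f x * Real.log (f x)) μ) :
    ∃ fk : ℕ → X → ℝ,
      (∀ k, Measurable (fk k)) ∧
      (∀ k, ∃ m M : ℝ, 0 < m ∧ ∀ x, m ≤ fk k x ∧ fk k x ≤ M) ∧
      Tendsto (fun k => ∫ x, |f x - fk k x| ∂μ) atTop (𝓝 0) ∧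
      Tendsto (fun k => ∫ x, f x * (Real.log (f x) - Real.log (fk k x)) ∂μ) atTop (𝓝 0) := by
  set fk : ℕ → X → ℝ := fun k x => max ((k : ℝ) + 1)⁻¹ (min (f x) ((k : ℝ) + 1)) with hfk
  have hc1 : ∀ k : ℕ, (1 : ℝ) ≤ (k : ℝ) + 1 := fun k => by
    have : (0:ℝ) ≤ (k:ℝ) := Nat.cast_nonneg k
    linarith
  have hc0 : ∀ k : ℕ, (0 : ℝ) < (k : ℝ) + 1 := fun k => lt_of_lt_of_le one_pos (hc1 k)
  have hci : ∀ k : ℕ, ((k : ℝ) + 1)⁻¹ ≤ 1 := fun k => inv_le_one_of_one_le₀ (hc1 k)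
  have hfkmeas : ∀ k, Measurable (fk k) :=
    fun k => measurable_const.max (hmeas.min measurable_const)
  -- integrability of f
  have hf_int : Integrable f μ := by
    apply Integrable.mono' ((integrable_const (Real.exp 1)).add hent.abs) hmeas.aestronglyMeasurable
    filter_upwards with x
    rw [Real.norm_eq_abs, abs_of_nonneg (hpos x)]
    by_cases h : f x ≤ Real.exp 1
    · have := abs_nonneg (f x * Real.log (f x)); simp only [Pi.add_apply]; linarith
    · push_neg at h
      have hx0 : 0 < f x := lt_trans (Real.exp_pos 1) h
      have hlog : 1 ≤ Real.log (f x) := by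
        rw [Real.le_log_iff_exp_le hx0]; exact h.le
      have h2 : f x ≤ f x * Real.log (f x) := le_mul_of_one_le_right (hpos x) hlog
      have := le_abs_self (f x * Real.log (f x))
      have := (Real.exp_pos 1).le
      simp only [Pi.add_apply]; linarith
  -- eventual exactness
  have hev : ∀ x, 0 < f x → ∀ᶠ k : ℕ in atTop, fk k x = f x := by
    intro x hx
    have h1 : ∀ᶠ k : ℕ in atTop, f x ≤ (k : ℝ) + 1 := by
      obtain ⟨N, hN⟩ := exists_nat_ge (f x)
      filter_upwards [eventually_ge_atTop N] with k hk
      have : (N : ℝ) ≤ (k : ℝ) := Nat.cast_le.mpr hk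
      linarith
    have h2 : ∀ᶠ k : ℕ in atTop, ((k : ℝ) + 1)⁻¹ ≤ f x := by
      have ht : Tendsto (fun k : ℕ => ((k : ℝ) + 1)⁻¹) atTop (𝓝 0) := by
        simpa [one_div] using (tendsto_one_div_add_atTop_nhds_zero_nat :
          Tendsto (fun n : ℕ => 1 / ((n : ℝ) + 1)) atTop (𝓝 0))
      exact (ht.eventually_lt_const hx).mono fun k hk => hk.le
    filter_upwards [h1, h2] with k hk1 hk2
    simp [hfk, min_eq_left hk1, max_eq_right hk2]
  refine ⟨fk, hfkmeas, ?_, ?_, ?_⟩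
  · intro k
    refine ⟨((k : ℝ) + 1)⁻¹, (k : ℝ) + 1, inv_pos.mpr (hc0 k), fun x => ⟨le_max_left _ _, ?_⟩⟩
    exact max_le ((hci k).trans (hc1 k)) (min_le_right _ _)
  · -- L¹ convergence
    have := MeasureTheory.tendsto_integral_of_dominated_convergence
      (F := fun k x => |f x - fk k x|) (f := fun _ => (0 : ℝ))
      (bound := fun x => f x + 1)
      (fun k => ((hmeas.sub (hfkmeas k)).abs).aestronglyMeasurable)
      (hf_int.add (integrable_const 1))
      (fun k => by
        filter_upwards with x
        rw [Real.norm_eq_abs, abs_abs, abs_sub_le_iff]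
        have h1 : 0 ≤ fk k x := le_trans (inv_pos.mpr (hc0 k)).le (le_max_left _ _)
        have h2 : fk k x ≤ f x + 1 := by
          apply max_le ((hci k).trans (by linarith [hpos x]))
          have := min_le_left (f x) ((k:ℝ)+1); linarith
        constructor <;> linarith [hpos x])
      ?_
    · simpa using this
    · filter_upwards with x
      rcases (hpos x).eq_or_lt with h0 | h0
      · -- f x = 0 : fk k x = (k+1)⁻¹ → 0
        have : ∀ k : ℕ, |f x - fk k x| = ((k : ℝ) + 1)⁻¹ := by
          intro k
          have hfk0 : fk k x = ((k : ℝ) + 1)⁻¹ := by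
            simp [hfk, ← h0, min_eq_left (hc0 k).le, max_eq_left (inv_pos.mpr (hc0 k)).le]
          rw [hfk0, ← h0, zero_sub, abs_neg, abs_of_nonneg (inv_pos.mpr (hc0 k)).le]
        simp only [this]
        simpa [one_div] using (tendsto_one_div_add_atTop_nhds_zero_nat :
          Tendsto (fun n : ℕ => 1 / ((n : ℝ) + 1)) atTop (𝓝 0))
      · apply Tendsto.congr' _ tendsto_const_nhds
        filter_upwards [hev x h0] with k hk
        rw [hk, sub_self, abs_zero]
  · -- entropy convergence
    have := MeasureTheory.tendsto_integral_of_dominated_convergence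
      (F := fun k x => f x * (Real.log (f x) - Real.log (fk k x))) (f := fun _ => (0 : ℝ))
      (bound := fun x => |f x * Real.log (f x)| + 1)
      (fun k => (hmeas.mul ((Real.measurable_log.comp hmeas).sub
        (Real.measurable_log.comp (hfkmeas k)))).aestronglyMeasurable)
      (hent.abs.add (integrable_const 1))
      (fun k => by
        filter_upwards with x
        rw [Real.norm_eq_abs]
        exact aux_bound (f x) ((k : ℝ) + 1) (hpos x) (hc1 k))
      ?_
    · simpa using this
    · filter_upwards with x
      rcases (hpos x).eq_or_lt with h0 | h0
      · simp [← h0]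
      · apply Tendsto.congr' _ tendsto_const_nhds
        filter_upwards [hev x h0] with k hk
        rw [hk, sub_self, mul_zero]
end

section
/- Let (X, μ) be a finite measure space, q ≥ 1, and f_j, f_k, f nonnegative functions in L^q(X, μ). If ∫_X |(f_j)^{1/s} − (f_k)^{1/s}|^{qs} dμ → 0 as j, k → ∞ for some s ≥ 1, then ∫_X |f_j − f_k|^q dμ → 0 as j, k → ∞, and conversely. -/
open MeasureTheory

open scoped NNReal ENNReal


private lemma real_rpow_add_le {x y p : ℝ} (hx : 0 ≤ x) (hy : 0 ≤ y) (hp : 0 ≤ p)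
    (hp1 : p ≤ 1) : (x + y) ^ p ≤ x ^ p + y ^ p := by
  have h := NNReal.rpow_add_le_add_rpow x.toNNReal y.toNNReal hp hp1
  have h' : ((x.toNNReal + y.toNNReal : ℝ≥0) : ℝ) ^ p ≤ (x.toNNReal : ℝ) ^ p + (y.toNNReal : ℝ) ^ p := by
    rw [← NNReal.coe_rpow, ← NNReal.coe_rpow, ← NNReal.coe_rpow, ← NNReal.coe_add]
    exact_mod_cast h
  rwa [NNReal.coe_add, Real.coe_toNNReal x hx, Real.coe_toNNReal y hy] at h'

/-- `|a^(1/s) - b^(1/s)|^s ≤ |a - b|` for nonneg `a, b` and `s ≥ 1`. -/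
private lemma abs_rpow_inv_sub_le_aux {a b s : ℝ} (hb : 0 ≤ b) (hab : b ≤ a) (hs : 1 ≤ s) :
    |a ^ (1/s) - b ^ (1/s)| ^ s ≤ |a - b| := by
  have hs0 : 0 < s := lt_of_lt_of_le one_pos hs
  have h1s : 0 ≤ 1/s := by positivity
  have h1s' : 1/s ≤ 1 := by rw [div_le_one hs0]; exact hs
  have ha : 0 ≤ a := hb.trans hab
  have hmono : b ^ (1/s) ≤ a ^ (1/s) := Real.rpow_le_rpow hb hab h1s
  have h1 : a ^ (1/s) - b ^ (1/s) ≤ (a - b) ^ (1/s) := by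
    have := real_rpow_add_le (sub_nonneg.2 hab) hb h1s h1s'
    rw [sub_add_cancel] at this
    linarith
  rw [abs_of_nonneg (sub_nonneg.2 hmono), abs_of_nonneg (sub_nonneg.2 hab)]
  calc (a ^ (1/s) - b ^ (1/s)) ^ s ≤ ((a - b) ^ (1/s)) ^ s :=
        Real.rpow_le_rpow (sub_nonneg.2 hmono) h1 hs0.le
    _ = a - b := by
        rw [← Real.rpow_mul (sub_nonneg.2 hab), one_div, inv_mul_cancel₀ hs0.ne',
          Real.rpow_one]

private lemma abs_rpow_inv_sub_le {a b s : ℝ} (ha : 0 ≤ a) (hb : 0 ≤ b) (hs : 1 ≤ s) :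
    |a ^ (1/s) - b ^ (1/s)| ^ s ≤ |a - b| := by
  rcases le_total b a with hab | hab
  · exact abs_rpow_inv_sub_le_aux hb hab hs
  · rw [abs_sub_comm, abs_sub_comm a b]
    exact abs_rpow_inv_sub_le_aux ha hab hs

/-- Mean value / Bernoulli: `u^s - v^s ≤ s * u^(s-1) * (u - v)` for `0 ≤ v ≤ u`, `s ≥ 1`. -/
private lemma rpow_sub_rpow_le {u v s : ℝ} (hv : 0 ≤ v) (huv : v ≤ u) (hs : 1 ≤ s) :
    u ^ s - v ^ s ≤ s * u ^ (s - 1) * (u - v) := by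
  have hs0 : 0 < s := lt_of_lt_of_le one_pos hs
  rcases eq_or_lt_of_le (hv.trans huv) with h0 | hu
  · have hu0 : u = 0 := h0.symm
    have hv0 : v = 0 := le_antisymm (huv.trans_eq hu0) hv
    simp [hu0, hv0, Real.zero_rpow hs0.ne']
  · set t : ℝ := v / u with ht
    have ht0 : 0 ≤ t := div_nonneg hv hu.le
    have hb := one_add_mul_self_le_rpow_one_add (s := t - 1) (p := s) (by linarith) hs
    rw [add_sub_cancel] at hb
    have key : u ^ s * (1 + s * (t - 1)) ≤ u ^ s * t ^ s :=
      mul_le_mul_of_nonneg_left hb (Real.rpow_nonneg hu.le s)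
    have e1 : u ^ s * t ^ s = v ^ s := by
      rw [← Real.mul_rpow hu.le ht0, mul_div_cancel₀ v hu.ne']
    have e2 : u ^ s = u ^ (s - 1) * u := by
      rw [← Real.rpow_add_one hu.ne']; ring_nf
    have e3 : u * t = v := mul_div_cancel₀ v hu.ne'
    have e4 : u ^ s * t = u ^ (s - 1) * v := by rw [e2, mul_assoc, e3]
    have e5 : u ^ s * (s * (t - 1)) = s * u ^ (s - 1) * (v - u) := by
      calc u ^ s * (s * (t - 1)) = s * (u ^ s * t) - s * (u ^ s) := by ring
        _ = s * (u ^ (s - 1) * v) - s * (u ^ (s - 1) * u) := by rw [e4, e2]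
        _ = s * u ^ (s - 1) * (v - u) := by ring
    have key2 : u ^ s + s * u ^ (s - 1) * (v - u) ≤ v ^ s := by
      have h' : u ^ s * (1 + s * (t - 1)) = u ^ s + u ^ s * (s * (t - 1)) := by ring
      rw [h', e5, e1] at key
      exact key
    linarith

private lemma abs_rpow_sub_rpow_le_aux {u v s : ℝ} (hv : 0 ≤ v) (huv : v ≤ u) (hs : 1 ≤ s) :
    |u ^ s - v ^ s| ≤ s * (u + v) ^ (s - 1) * |u - v| := by
  have hu : 0 ≤ u := hv.trans huv
  have hs0 : 0 < s := lt_of_lt_of_le one_pos hs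
  have hmono : v ^ s ≤ u ^ s := Real.rpow_le_rpow hv huv hs0.le
  rw [abs_of_nonneg (sub_nonneg.2 hmono), abs_of_nonneg (sub_nonneg.2 huv)]
  calc u ^ s - v ^ s ≤ s * u ^ (s - 1) * (u - v) := rpow_sub_rpow_le hv huv hs
    _ ≤ s * (u + v) ^ (s - 1) * (u - v) := by
        have h1 : u ^ (s - 1) ≤ (u + v) ^ (s - 1) :=
          Real.rpow_le_rpow hu (by linarith) (by linarith)
        have := mul_le_mul_of_nonneg_left h1 hs0.le
        exact mul_le_mul_of_nonneg_right this (sub_nonneg.2 huv)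

private lemma abs_rpow_sub_rpow_le {u v s : ℝ} (hu : 0 ≤ u) (hv : 0 ≤ v) (hs : 1 ≤ s) :
    |u ^ s - v ^ s| ≤ s * (u + v) ^ (s - 1) * |u - v| := by
  rcases le_total v u with huv | huv
  · exact abs_rpow_sub_rpow_le_aux hv huv hs
  · rw [abs_sub_comm, abs_sub_comm u v, add_comm]
    exact abs_rpow_sub_rpow_le_aux hu huv hs

private lemma ennreal_add_rpow_le (x y : ℝ≥0∞) {p : ℝ} (hp : 0 ≤ p) :
    (x + y) ^ p ≤ 2 ^ p * (x ^ p + y ^ p) := by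
  calc (x + y) ^ p ≤ (2 * (x ⊔ y)) ^ p := by
        apply ENNReal.rpow_le_rpow _ hp
        rw [two_mul]
        exact add_le_add le_sup_left le_sup_right
    _ = 2 ^ p * (x ⊔ y) ^ p := ENNReal.mul_rpow_of_nonneg _ _ hp
    _ ≤ 2 ^ p * (x ^ p + y ^ p) := by
        gcongr
        rcases le_total x y with h | h
        · rw [sup_eq_right.2 h]; exact le_add_self
        · rw [sup_eq_left.2 h]; exact le_self_add

private lemma lintegral_rpow_add_le' {X : Type*} [MeasurableSpace X] (μ : Measure X)
    (φ ψ : X → ℝ≥0∞) (hφ : Measurable φ) (hψ : Measurable ψ) {r : ℝ} (hr : 0 ≤ r) :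
    ∫⁻ x, (φ x + ψ x) ^ r ∂μ ≤ 2 ^ r * (∫⁻ x, φ x ^ r ∂μ + ∫⁻ x, ψ x ^ r ∂μ) := by
  calc ∫⁻ x, (φ x + ψ x) ^ r ∂μ
      ≤ ∫⁻ x, 2 ^ r * (φ x ^ r + ψ x ^ r) ∂μ :=
        lintegral_mono fun x => ennreal_add_rpow_le _ _ hr
    _ = 2 ^ r * ∫⁻ x, (φ x ^ r + ψ x ^ r) ∂μ :=
        lintegral_const_mul' _ _ (ENNReal.rpow_lt_top_of_nonneg hr ENNReal.ofNat_ne_top).ne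
    _ = 2 ^ r * (∫⁻ x, φ x ^ r ∂μ + ∫⁻ x, ψ x ^ r ∂μ) := by
        rw [lintegral_add_left (hφ.pow_const r)]


/-- A sequence of nonnegative `L^q` functions is `L^q`-Cauchy iff the sequence of their
`1/s`-th powers is `L^{qs}`-Cauchy (`s ≥ 1`). -/
theorem stmt8 {X : Type*} [MeasurableSpace X] (μ : Measure X) [IsFiniteMeasure μ]
    (q s : ℝ) (hq : 1 ≤ q) (hs : 1 ≤ s)
    (f : ℕ → X → ℝ) (hmeas : ∀ j, Measurable (f j)) (hpos : ∀ j x, 0 ≤ f j x)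
    (hL : ∀ j, MemLp (f j) (ENNReal.ofReal q) μ) :
    (∀ ε > (0 : ℝ), ∃ N, ∀ j ≥ N, ∀ k ≥ N,
        ∫ x, |(f j x) ^ (1 / s) - (f k x) ^ (1 / s)| ^ (q * s) ∂μ < ε) ↔
    (∀ ε > (0 : ℝ), ∃ N, ∀ j ≥ N, ∀ k ≥ N,
        ∫ x, |f j x - f k x| ^ q ∂μ < ε) := by
  have hq0 : (0:ℝ) < q := lt_of_lt_of_le one_pos hq
  have hs0 : (0:ℝ) < s := lt_of_lt_of_le one_pos hs
  have hp0 : (0:ℝ) < q * s := by positivity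
  set G : ℕ → X → ℝ := fun j x => f j x ^ (1/s) with hGdef
  have hGmeas : ∀ j, Measurable (G j) := fun j => (hmeas j).pow_const _
  have hGpos : ∀ j x, 0 ≤ G j x := fun j x => Real.rpow_nonneg (hpos j x) _
  constructor
  · -- forward direction
    intro hyp
    rcases eq_or_lt_of_le hs with hs1 | hs1
    · -- s = 1
      subst hs1
      intro ε hε
      obtain ⟨N, hN⟩ := hyp ε hε
      refine ⟨N, fun j hj k hk => ?_⟩
      have := hN j hj k hk
      norm_num [Real.rpow_one] at this
      exact this
    · -- 1 < s
      have hsne : s ≠ 0 := hs0.ne'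
      have hGs : ∀ j x, G j x ^ s = f j x := by
        intro j x
        rw [hGdef]
        rw [← Real.rpow_mul (hpos j x), one_div, inv_mul_cancel₀ hsne, Real.rpow_one]
      set F : ℕ → X → ℝ≥0∞ := fun j x => ENNReal.ofReal (f j x) with hFdef
      have hFmeas : ∀ j, Measurable (F j) := fun j => ENNReal.measurable_ofReal.comp (hmeas j)
      have hGF : ∀ j, Measurable fun x => ENNReal.ofReal (G j x) :=
        fun j => ENNReal.measurable_ofReal.comp (hGmeas j)
      have hFGp : ∀ j x, ENNReal.ofReal (G j x) ^ (q*s) = F j x ^ q := by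
        intro j x
        show ENNReal.ofReal (f j x ^ (1/s)) ^ (q*s) = ENNReal.ofReal (f j x) ^ q
        rw [← ENNReal.ofReal_rpow_of_nonneg (hpos j x) (one_div_nonneg.2 hs0.le), ← ENNReal.rpow_mul]
        congr 1
        field_simp
      set D : ℕ → ℝ≥0∞ := fun j => ∫⁻ x, F j x ^ q ∂μ with hDdef
      have hDfin : ∀ j, D j ≠ ∞ := by
        intro j
        have h1 := (hL j).2
        rw [eLpNorm_eq_lintegral_rpow_enorm_toReal
          (by simp only [ne_eq, ENNReal.ofReal_eq_zero, not_le]; linarith)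
          ENNReal.ofReal_ne_top, ENNReal.toReal_ofReal hq0.le] at h1
        rw [ENNReal.rpow_lt_top_iff_of_pos (by positivity)] at h1
        have h2 : D j = ∫⁻ x, (‖f j x‖ₑ) ^ q ∂μ :=
          lintegral_congr fun x => by rw [Real.enorm_eq_ofReal (hpos j x)]
        rw [h2]; exact h1.ne
      have hDG : ∀ j, ∫⁻ x, ENNReal.ofReal (G j x) ^ (q*s) ∂μ = D j :=
        fun j => lintegral_congr fun x => hFGp j x
      set B : ℕ → ℕ → ℝ≥0∞ :=
        fun j k => ∫⁻ x, ENNReal.ofReal (|G j x - G k x|) ^ (q*s) ∂μ with hBdef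
      set A : ℕ → ℕ → ℝ≥0∞ :=
        fun j k => ∫⁻ x, ENNReal.ofReal (|f j x - f k x|) ^ q ∂μ with hAdef
      have hBint : ∀ j k, ∫ x, |G j x - G k x| ^ (q*s) ∂μ = (B j k).toReal := by
        intro j k
        rw [integral_eq_lintegral_of_nonneg_ae (f := fun x => |G j x - G k x| ^ (q*s))
          (Filter.Eventually.of_forall fun x => by positivity)
          ((((hGmeas j).sub (hGmeas k)).abs.pow_const _)).aestronglyMeasurable]
        congr 1
        exact lintegral_congr fun x => by
          rw [ENNReal.ofReal_rpow_of_nonneg (abs_nonneg _) hp0.le]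
      have hAint : ∀ j k, ∫ x, |f j x - f k x| ^ q ∂μ = (A j k).toReal := by
        intro j k
        rw [integral_eq_lintegral_of_nonneg_ae (f := fun x => |f j x - f k x| ^ q)
          (Filter.Eventually.of_forall fun x => by positivity)
          ((((hmeas j).sub (hmeas k)).abs.pow_const _)).aestronglyMeasurable]
        congr 1
        exact lintegral_congr fun x => by
          rw [ENNReal.ofReal_rpow_of_nonneg (abs_nonneg _) hq0.le]
      have habsGle : ∀ j k x, |G j x - G k x| ≤ G j x + G k x := by
        intro j k x
        rw [abs_le]
        constructor <;> [linarith [hGpos j x, hGpos k x]; linarith [hGpos j x, hGpos k x]]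
      have hBbd : ∀ j k, B j k ≤ 2 ^ (q*s) * (D j + D k) := by
        intro j k
        calc B j k ≤ ∫⁻ x, (ENNReal.ofReal (G j x) + ENNReal.ofReal (G k x)) ^ (q*s) ∂μ := by
              apply lintegral_mono
              intro x
              apply ENNReal.rpow_le_rpow _ hp0.le
              rw [← ENNReal.ofReal_add (hGpos j x) (hGpos k x)]
              exact ENNReal.ofReal_le_ofReal (habsGle j k x)
          _ ≤ 2 ^ (q*s) * ((∫⁻ x, ENNReal.ofReal (G j x) ^ (q*s) ∂μ)
                + ∫⁻ x, ENNReal.ofReal (G k x) ^ (q*s) ∂μ) :=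
              lintegral_rpow_add_le' μ _ _ (hGF j) (hGF k) hp0.le
          _ = 2 ^ (q*s) * (D j + D k) := by rw [hDG j, hDG k]
      have h2p_ne_top : (2 : ℝ≥0∞) ^ (q*s) ≠ ∞ :=
        (ENNReal.rpow_lt_top_of_nonneg hp0.le ENNReal.ofNat_ne_top).ne
      have hBfin : ∀ j k, B j k ≠ ∞ := by
        intro j k
        exact ne_top_of_le_ne_top
          (ENNReal.mul_ne_top h2p_ne_top (ENNReal.add_ne_top.2 ⟨hDfin j, hDfin k⟩)) (hBbd j k)
      -- uniform bound on D
      obtain ⟨N₀, hN₀⟩ := hyp 1 one_pos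
      have hBle1 : ∀ j, N₀ ≤ j → B j N₀ ≤ 1 := by
        intro j hj
        have h1 := hN₀ j hj N₀ le_rfl
        rw [hBint j N₀] at h1
        have h := (ENNReal.lt_ofReal_iff_toReal_lt (hBfin j N₀)).2 h1
        simpa using h.le
      set M : ℝ≥0∞ := ((Finset.range (N₀+1)).sup D) ⊔ (2 ^ (q*s) * (1 + D N₀)) with hMdef
      have hMfin : M ≠ ∞ := by
        have h1 : (Finset.range (N₀+1)).sup D < ∞ :=
          (Finset.sup_lt_iff (by simp)).2 fun j _ => (hDfin j).lt_top
        have h2 : 2 ^ (q*s) * (1 + D N₀) < ∞ :=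
          (ENNReal.mul_ne_top h2p_ne_top (ENNReal.add_ne_top.2 ⟨ENNReal.one_ne_top, hDfin N₀⟩)).lt_top
        exact (sup_lt_iff.2 ⟨h1, h2⟩).ne
      have hDM : ∀ j, D j ≤ M := by
        intro j
        rcases lt_or_ge j (N₀+1) with hj | hj
        · exact le_sup_of_le_left (Finset.le_sup (Finset.mem_range.2 hj))
        · have hjN : N₀ ≤ j := by omega
          refine le_sup_of_le_right ?_
          have step : D j ≤ 2 ^ (q*s) * (B j N₀ + D N₀) := by
            have hpt : ∀ x, F j x ^ q ≤
                (ENNReal.ofReal (|G j x - G N₀ x|) + ENNReal.ofReal (G N₀ x)) ^ (q*s) := by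
              intro x
              rw [← hFGp j x]
              apply ENNReal.rpow_le_rpow _ hp0.le
              rw [← ENNReal.ofReal_add (abs_nonneg _) (hGpos N₀ x)]
              apply ENNReal.ofReal_le_ofReal
              calc G j x = (G j x - G N₀ x) + G N₀ x := by ring
                _ ≤ |G j x - G N₀ x| + G N₀ x := add_le_add_left (le_abs_self _) _
            calc D j ≤ ∫⁻ x, (ENNReal.ofReal (|G j x - G N₀ x|)
                  + ENNReal.ofReal (G N₀ x)) ^ (q*s) ∂μ := lintegral_mono hpt
              _ ≤ 2 ^ (q*s) * ((∫⁻ x, ENNReal.ofReal (|G j x - G N₀ x|) ^ (q*s) ∂μ)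
                    + ∫⁻ x, ENNReal.ofReal (G N₀ x) ^ (q*s) ∂μ) :=
                  lintegral_rpow_add_le' μ _ _
                    (ENNReal.measurable_ofReal.comp ((hGmeas j).sub (hGmeas N₀)).abs)
                    (hGF N₀) hp0.le
              _ = 2 ^ (q*s) * (B j N₀ + D N₀) := by rw [hDG N₀]
          refine step.trans ?_
          gcongr
          exact hBle1 j hjN
      -- Hoelder
      set t : ℝ := s / (s - 1) with htdef
      have hsconj : s.HolderConjugate t := Real.HolderConjugate.conjExponent hs1
      have ht0 : 0 < t := hsconj.symm.pos
      set K0 : ℝ≥0∞ := 2 ^ (q*s) * (M + M) with hK0def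
      have hK0fin : K0 ≠ ∞ :=
        ENNReal.mul_ne_top h2p_ne_top (ENNReal.add_ne_top.2 ⟨hMfin, hMfin⟩)
      set K : ℝ≥0∞ := K0 ^ (1/t) with hKdef
      have hKfin : K ≠ ∞ := (ENNReal.rpow_lt_top_of_nonneg (by positivity) hK0fin).ne
      set C : ℝ≥0∞ := ENNReal.ofReal s ^ q * K with hCdef
      have hCfin : C ≠ ∞ :=
        ENNReal.mul_ne_top (ENNReal.rpow_lt_top_of_nonneg hq0.le ENNReal.ofReal_ne_top).ne hKfin
      have hH : ∀ j k, A j k ≤ C * (B j k) ^ (1/s) := by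
        intro j k
        set V : X → ℝ≥0∞ := fun x => ENNReal.ofReal (|G j x - G k x|) ^ q with hVdef
        set U : X → ℝ≥0∞ :=
          fun x => (ENNReal.ofReal (G j x) + ENNReal.ofReal (G k x)) ^ (q*(s-1)) with hUdef
        have hVm : Measurable V :=
          (ENNReal.measurable_ofReal.comp ((hGmeas j).sub (hGmeas k)).abs).pow_const _
        have hUm : Measurable U := ((hGF j).add (hGF k)).pow_const _
        have hpt : ∀ x, ENNReal.ofReal (|f j x - f k x|) ^ q
            ≤ ENNReal.ofReal s ^ q * (V x * U x) := by
          intro x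
          have hre : |f j x - f k x| ≤ s * (G j x + G k x) ^ (s-1) * |G j x - G k x| := by
            have h := abs_rpow_sub_rpow_le (hGpos j x) (hGpos k x) hs
            rw [hGs j x, hGs k x] at h
            exact h
          calc ENNReal.ofReal (|f j x - f k x|) ^ q
              ≤ ENNReal.ofReal (s * (G j x + G k x) ^ (s-1) * |G j x - G k x|) ^ q :=
                ENNReal.rpow_le_rpow (ENNReal.ofReal_le_ofReal hre) hq0.le
            _ = ENNReal.ofReal s ^ q * (V x * U x) := by
                have hA0 : (0:ℝ) ≤ (G j x + G k x) ^ (s-1) :=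
                  Real.rpow_nonneg (add_nonneg (hGpos j x) (hGpos k x)) _
                show _ = ENNReal.ofReal s ^ q * (ENNReal.ofReal (|G j x - G k x|) ^ q *
                  (ENNReal.ofReal (G j x) + ENNReal.ofReal (G k x)) ^ (q*(s-1)))
                rw [ENNReal.ofReal_mul (mul_nonneg hs0.le hA0), ENNReal.ofReal_mul hs0.le,
                  ENNReal.mul_rpow_of_nonneg _ _ hq0.le, ENNReal.mul_rpow_of_nonneg _ _ hq0.le,
                  ← ENNReal.ofReal_rpow_of_nonneg (add_nonneg (hGpos j x) (hGpos k x))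
                    (by linarith : (0:ℝ) ≤ s - 1),
                  ENNReal.ofReal_add (hGpos j x) (hGpos k x), ← ENNReal.rpow_mul,
                  mul_comm (s-1) q]
                ring
        have hUbd : ∫⁻ x, U x ^ t ∂μ ≤ K0 := by
          have hs1' : s - 1 ≠ 0 := sub_ne_zero.2 (ne_of_gt hs1)
          have hUt : ∀ x, U x ^ t
              = (ENNReal.ofReal (G j x) + ENNReal.ofReal (G k x)) ^ (q*s) := by
            intro x
            show ((ENNReal.ofReal (G j x) + ENNReal.ofReal (G k x)) ^ (q*(s-1))) ^ t
              = (ENNReal.ofReal (G j x) + ENNReal.ofReal (G k x)) ^ (q*s)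
            rw [← ENNReal.rpow_mul, htdef]
            congr 1
            field_simp
          calc ∫⁻ x, U x ^ t ∂μ
              = ∫⁻ x, (ENNReal.ofReal (G j x) + ENNReal.ofReal (G k x)) ^ (q*s) ∂μ :=
                lintegral_congr fun x => hUt x
            _ ≤ 2 ^ (q*s) * ((∫⁻ x, ENNReal.ofReal (G j x) ^ (q*s) ∂μ)
                  + ∫⁻ x, ENNReal.ofReal (G k x) ^ (q*s) ∂μ) :=
                lintegral_rpow_add_le' μ _ _ (hGF j) (hGF k) hp0.le
            _ = 2 ^ (q*s) * (D j + D k) := by rw [hDG j, hDG k]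
            _ ≤ K0 := by rw [hK0def]; gcongr <;> [exact hDM j; exact hDM k]
        have hVs : ∀ x, V x ^ s = ENNReal.ofReal (|G j x - G k x|) ^ (q*s) := by
          intro x
          show (ENNReal.ofReal (|G j x - G k x|) ^ q) ^ s = _
          rw [← ENNReal.rpow_mul]
        calc A j k ≤ ∫⁻ x, ENNReal.ofReal s ^ q * (V x * U x) ∂μ := lintegral_mono hpt
          _ = ENNReal.ofReal s ^ q * ∫⁻ x, V x * U x ∂μ :=
              lintegral_const_mul' _ _
                (ENNReal.rpow_lt_top_of_nonneg hq0.le ENNReal.ofReal_ne_top).ne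
          _ ≤ ENNReal.ofReal s ^ q
              * ((∫⁻ x, V x ^ s ∂μ) ^ (1/s) * (∫⁻ x, U x ^ t ∂μ) ^ (1/t)) := by
              gcongr
              exact ENNReal.lintegral_mul_le_Lp_mul_Lq μ hsconj
                hVm.aemeasurable hUm.aemeasurable
          _ = ENNReal.ofReal s ^ q * ((B j k) ^ (1/s) * (∫⁻ x, U x ^ t ∂μ) ^ (1/t)) := by
              rw [hBdef]
              congr 3
              exact lintegral_congr fun x => hVs x
          _ ≤ ENNReal.ofReal s ^ q * ((B j k) ^ (1/s) * K) :=
              mul_le_mul_right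
                (mul_le_mul_right (ENNReal.rpow_le_rpow hUbd (by positivity)) _) _
          _ = C * (B j k) ^ (1/s) := by rw [hCdef]; ring
      -- conclude
      intro ε hε
      by_cases hC : C = 0
      · refine ⟨0, fun j _ k _ => ?_⟩
        have hA0 : A j k = 0 := le_antisymm (by simpa [hC] using hH j k) (zero_le)
        rw [hAint, hA0]
        simpa using hε
      · set x0 : ℝ≥0∞ := ENNReal.ofReal ε / (2 * C) with hx0def
        have h2C0 : 2 * C ≠ 0 := by
          simp only [ne_eq, mul_eq_zero, not_or]
          exact ⟨two_ne_zero, hC⟩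
        have h2Cfin : 2 * C ≠ ∞ := ENNReal.mul_ne_top ENNReal.ofNat_ne_top hCfin
        have hx00 : x0 ≠ 0 := by
          rw [hx0def]
          simp only [ne_eq, ENNReal.div_eq_zero_iff, not_or]
          exact ⟨by simp only [ENNReal.ofReal_eq_zero, not_le]; linarith, h2Cfin⟩
        have hx0top : x0 ≠ ∞ := by
          rw [hx0def]
          exact (ENNReal.div_lt_top ENNReal.ofReal_ne_top h2C0).ne
        set δ : ℝ≥0∞ := x0 ^ s with hδdef
        have hδ0 : δ ≠ 0 := by
          rw [hδdef]
          simp only [ne_eq, ENNReal.rpow_eq_zero_iff, not_or]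
          constructor
          · rintro ⟨h, -⟩; exact hx00 h
          · rintro ⟨h, -⟩; exact hx0top h
        have hδtop : δ ≠ ∞ := (ENNReal.rpow_lt_top_of_nonneg hs0.le hx0top).ne
        obtain ⟨N, hN⟩ := hyp δ.toReal (ENNReal.toReal_pos hδ0 hδtop)
        refine ⟨N, fun j hj k hk => ?_⟩
        have hBlt : B j k < δ := by
          have h1 := hN j hj k hk
          rw [hBint] at h1
          have h := (ENNReal.lt_ofReal_iff_toReal_lt (hBfin j k)).2 h1
          rwa [ENNReal.ofReal_toReal hδtop] at h
        have hfin : A j k < ENNReal.ofReal ε := by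
          calc A j k ≤ C * (B j k) ^ (1/s) := hH j k
            _ ≤ C * δ ^ (1/s) :=
                mul_le_mul_right (ENNReal.rpow_le_rpow hBlt.le (by positivity)) _
            _ = C * x0 := by
                rw [hδdef, ← ENNReal.rpow_mul, mul_one_div, div_self hsne, ENNReal.rpow_one]
            _ = ENNReal.ofReal ε / 2 := by
                have hcc : C * C⁻¹ = 1 := ENNReal.mul_inv_cancel hC hCfin
                calc C * x0
                    = (C * C⁻¹) * (ENNReal.ofReal ε * 2⁻¹) := by
                      rw [hx0def, div_eq_mul_inv,
                        ENNReal.mul_inv (Or.inl (by norm_num)) (Or.inl ENNReal.ofNat_ne_top)]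
                      ring
                  _ = ENNReal.ofReal ε / 2 := by rw [hcc, one_mul, div_eq_mul_inv]
            _ < ENNReal.ofReal ε :=
                ENNReal.half_lt_self
                  (by simp only [ne_eq, ENNReal.ofReal_eq_zero, not_le]; linarith)
                  ENNReal.ofReal_ne_top
        rw [hAint]
        exact ENNReal.toReal_lt_of_lt_ofReal hfin
  · -- backward direction
    intro hyp ε hε
    obtain ⟨N, hN⟩ := hyp ε hε
    refine ⟨N, fun j hj k hk => ?_⟩
    have hInt : Integrable (fun x => |f j x - f k x| ^ q) μ := by
      have h := ((hL j).sub (hL k)).integrable_norm_rpow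
        (by simp [ENNReal.ofReal_eq_zero]; linarith) ENNReal.ofReal_ne_top
      simpa [ENNReal.toReal_ofReal hq0.le, Real.norm_eq_abs] using h
    calc ∫ x, |G j x - G k x| ^ (q*s) ∂μ ≤ ∫ x, |f j x - f k x| ^ q ∂μ := by
          apply integral_mono_of_nonneg
          · exact Filter.Eventually.of_forall fun x => by positivity
          · exact hInt
          · apply Filter.Eventually.of_forall
            intro x
            have h1 : |G j x - G k x| ^ s ≤ |f j x - f k x| :=
              abs_rpow_inv_sub_le (hpos j x) (hpos k x) hs
            calc |G j x - G k x| ^ (q*s) = (|G j x - G k x| ^ s) ^ q := by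
                  rw [← Real.rpow_mul (abs_nonneg _), mul_comm]
              _ ≤ |f j x - f k x| ^ q :=
                  Real.rpow_le_rpow (Real.rpow_nonneg (abs_nonneg _) _) h1 hq0.le
      _ < ε := hN j hj k hk
end
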